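/- Let S₁, …, S_{n+1} be real-valued random variables on a probability space whose joint distribution is exchangeable, i.e., for every permutation σ of {1, …, n+1} the joint law of (S_{σ(1)}, …, S_{σ(n+1)}) equals the joint law of (S₁, …, S_{n+1}). Let α ∈ (0,1), set k = ⌈(n+1)(1−α)⌉, assume k ≤ n, and let q̂ be the k-th smallest value among S₁, …, S_n (the k-th order statistic of the calibration scores). Then P(S_{n+1} ≤ q̂) ≥ 1 − α. -/

import Mathlib

open MeasureTheory
open scoped ENNReal

/-- The `k`-th smallest value (k-th order statistic, 1-indexed) among
`v 0, …, v (n-1)`. -/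
noncomputable def kthSmallest (n : ℕ) (k : ℕ) (v : Fin n → ℝ) : ℝ :=
  ((List.ofFn v).mergeSort (fun a b => a ≤ b)).getD (k - 1) 0

private lemma countP_ofFn {α : Type*} (p : α → Prop) [DecidablePred p] :
    ∀ {n : ℕ} (v : Fin n → α),
      (List.ofFn v).countP (fun a => decide (p a))
        = (Finset.univ.filter (fun i => p (v i))).card := by
  intro n
  induction n with
  | zero => intro v; simp
  | succ n ih =>
    intro v
    rw [List.ofFn_succ, List.countP_cons, ih, Finset.card_filter, Finset.card_filter,
      Fin.sum_univ_succ]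
    simp only [decide_eq_true_eq]
    omega

private lemma le_kthSmallest_iff {n k : ℕ} (hk1 : 1 ≤ k) (hkn : k ≤ n)
    (v : Fin n → ℝ) (t : ℝ) :
    t ≤ kthSmallest n k v ↔ ((Finset.univ.filter (fun i => v i < t)).card < k) := by
  classical
  set l := (List.ofFn v).mergeSort (fun a b => a ≤ b) with hl
  have hperm : l.Perm (List.ofFn v) := List.mergeSort_perm _ _
  have hlen : l.length = n := by rw [hperm.length_eq, List.length_ofFn]
  have hk' : k - 1 < l.length := by omega
  have hget : kthSmallest n k v = l[k - 1] := by
    rw [kthSmallest, ← hl, List.getD_eq_getElem l 0 hk']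
  have hsorted : List.Pairwise (fun a b : ℝ => a ≤ b) l := by
    have := List.pairwise_mergeSort (le := fun a b : ℝ => decide (a ≤ b))
      (fun a b c hab hbc => by
        simp only [decide_eq_true_eq] at *; exact le_trans hab hbc)
      (fun a b => by
        simp only [Bool.or_eq_true, decide_eq_true_eq]; exact le_total a b)
      (List.ofFn v)
    rw [← hl] at this
    simpa using this
  have hmono : ∀ i j (_ : i < l.length) (hj : j < l.length), i ≤ j → l[i] ≤ l[j] := by
    intro i j hi hj hij
    rcases eq_or_lt_of_le hij with rfl | hlt
    · exact le_refl _
    · exact (List.pairwise_iff_getElem.1 hsorted) i j hi hj hlt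
  have hcount : (Finset.univ.filter (fun i => v i < t)).card
      = l.countP (fun a => decide (a < t)) := by
    rw [hperm.countP_eq, countP_ofFn]
  rw [hget, hcount]
  constructor
  · intro h
    have hsplit : l.countP (fun a => decide (a < t))
        = (l.take (k - 1)).countP (fun a => decide (a < t))
          + (l.drop (k - 1)).countP (fun a => decide (a < t)) := by
      conv_lhs => rw [← List.take_append_drop (k - 1) l]
      exact List.countP_append
    have hdrop : (l.drop (k - 1)).countP (fun a => decide (a < t)) = 0 := by
      rw [List.countP_eq_zero]
      intro a ha
      obtain ⟨j, hj, rfl⟩ := List.mem_iff_getElem.1 ha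
      have hjl : k - 1 + j < l.length := by
        rw [List.length_drop] at hj; omega
      have hgd : (l.drop (k - 1))[j] = l[k - 1 + j]'hjl := List.getElem_drop
      rw [hgd]
      simp only [decide_eq_true_eq, not_lt]
      exact le_trans h (hmono (k - 1) (k - 1 + j) hk' hjl (by omega))
    have htake : (l.take (k - 1)).countP (fun a => decide (a < t)) ≤ k - 1 := by
      refine le_trans List.countP_le_length ?_
      rw [List.length_take]; omega
    omega
  · intro h
    by_contra hnot
    push_neg at hnot
    have hall : (l.take k).countP (fun a => decide (a < t)) = (l.take k).length := by
      rw [List.countP_eq_length]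
      intro a ha
      obtain ⟨j, hj, rfl⟩ := List.mem_iff_getElem.1 ha
      have hjk : j < k := by rw [List.length_take] at hj; omega
      have hjl : j < l.length := by omega
      have hgd : (l.take k)[j] = l[j]'hjl := List.getElem_take
      rw [hgd]
      simp only [decide_eq_true_eq]
      exact lt_of_le_of_lt (hmono j (k - 1) hjl hk' (by omega)) hnot
    have hlen_take : (l.take k).length = k := by
      rw [List.length_take]; omega
    have hsplit : l.countP (fun a => decide (a < t))
        = (l.take k).countP (fun a => decide (a < t))
          + (l.drop k).countP (fun a => decide (a < t)) := by
      conv_lhs => rw [← List.take_append_drop k l]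
      exact List.countP_append
    omega

/-- At least `k` of the `m` values have strictly-below-count less than `k`. -/
private lemma card_low_rank {m k : ℕ} (hk : k ≤ m) (w : Fin m → ℝ) :
    k ≤ (Finset.univ.filter (fun j =>
        (Finset.univ.filter (fun i => w i < w j)).card < k)).card := by
  classical
  set σ := Tuple.sort w with hσ
  have hmono : Monotone (w ∘ σ) := Tuple.monotone_sort w
  have hinj : Function.Injective (fun a : Fin k => σ (Fin.castLE hk a)) := by
    intro a b hab
    exact Fin.castLE_injective hk (σ.injective hab)
  have hsub : ∀ a : Fin k, σ (Fin.castLE hk a) ∈ Finset.univ.filter (fun j =>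
      (Finset.univ.filter (fun i => w i < w j)).card < k) := by
    intro a
    simp only [Finset.mem_filter, Finset.mem_univ, true_and]
    have hre : (Finset.univ.filter (fun i => w i < w (σ (Fin.castLE hk a)))).card
        = (Finset.univ.filter (fun i' : Fin m =>
            w (σ i') < w (σ (Fin.castLE hk a)))).card :=
      (Finset.card_equiv σ (fun i => by simp)).symm
    rw [hre]
    have hsub2 : Finset.univ.filter (fun i' : Fin m =>
        w (σ i') < w (σ (Fin.castLE hk a)))
        ⊆ Finset.univ.filter (fun i' : Fin m => i' < Fin.castLE hk a) := by
      intro i' hi'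
      simp only [Finset.mem_filter, Finset.mem_univ, true_and] at hi' ⊢
      by_contra hge
      push_neg at hge
      exact absurd hi' (not_lt.2 (hmono hge))
    have hcard2 : (Finset.univ.filter
        (fun i' : Fin m => i' < Fin.castLE hk a)).card = (a : ℕ) := by
      rw [show (Finset.univ.filter (fun i' : Fin m => i' < Fin.castLE hk a))
          = Finset.Iio (Fin.castLE hk a) by ext; simp, Fin.card_Iio]
      simp
    have hc := Finset.card_le_card hsub2
    have hak : (a : ℕ) < k := a.isLt
    omega
  have hss : (Finset.univ.map ⟨fun a : Fin k => σ (Fin.castLE hk a), hinj⟩)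
      ⊆ Finset.univ.filter (fun j =>
        (Finset.univ.filter (fun i => w i < w j)).card < k) := by
    intro x hx
    simp only [Finset.mem_map, Finset.mem_univ, true_and,
      Function.Embedding.coeFn_mk] at hx
    obtain ⟨a, ha⟩ := hx
    rw [← ha]
    exact hsub a
  have := Finset.card_le_card hss
  simpa using this

/-- Conformal prediction lower coverage guarantee: for exchangeable scores
`S 0, …, S n`, with `q̂` the `⌈(n+1)(1-α)⌉`-th smallest of the first `n`
(calibration) scores, `P(S_{n+1} ≤ q̂) ≥ 1 - α`. -/
theorem conformal_coverage_lower_bound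
    {Ω : Type*} [MeasurableSpace Ω] (P : Measure Ω) [IsProbabilityMeasure P]
    (n : ℕ) (S : Fin (n + 1) → Ω → ℝ) (hmeas : ∀ i, Measurable (S i))
    (hexch : ∀ σ : Equiv.Perm (Fin (n + 1)),
      Measure.map (fun ω => fun i => S (σ i) ω) P
        = Measure.map (fun ω => fun i => S i ω) P)
    (α : ℝ) (hα : α ∈ Set.Ioo (0 : ℝ) 1)
    (hk : ⌈((n : ℝ) + 1) * (1 - α)⌉₊ ≤ n) :
    ENNReal.ofReal (1 - α) ≤
      P {ω | S (Fin.last n) ω ≤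
        kthSmallest n (⌈((n : ℝ) + 1) * (1 - α)⌉₊) (fun i => S i.castSucc ω)} := by
  classical
  obtain ⟨hα0, hα1⟩ := hα
  set k : ℕ := ⌈((n : ℝ) + 1) * (1 - α)⌉₊ with hkdef
  have hk1 : 1 ≤ k := by
    rw [hkdef, Nat.one_le_ceil_iff]
    have h1α : (0 : ℝ) < 1 - α := by linarith
    have hn1 : (0 : ℝ) < (n : ℝ) + 1 := by positivity
    exact mul_pos hn1 h1α
  set f : Fin (n + 1) → Ω → ℕ := fun j ω =>
    (Finset.univ.filter (fun i => S i ω < S j ω)).card with hfdef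
  have hfmeas : ∀ j, Measurable (f j) := by
    intro j
    have hrw : f j = fun ω => ∑ i : Fin (n + 1), if S i ω < S j ω then 1 else 0 := by
      funext ω; rw [hfdef]; exact Finset.card_filter _ _
    rw [hrw]
    exact Finset.measurable_sum _ fun i _ =>
      Measurable.ite (measurableSet_lt (hmeas i) (hmeas j)) measurable_const
        measurable_const
  set B : Fin (n + 1) → Set Ω := fun j => {ω | f j ω < k} with hBdef
  have hBmeas : ∀ j, MeasurableSet (B j) := fun j =>
    (hfmeas j) (show MeasurableSet {m : ℕ | m < k} from trivial)
  -- exchangeability: all B j have the same probability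
  have hBeq : ∀ j, P (B j) = P (B (Fin.last n)) := by
    intro j
    set g : (Fin (n + 1) → ℝ) → ℕ := fun x =>
      (Finset.univ.filter (fun i => x i < x (Fin.last n))).card with hgdef
    have hgmeas : Measurable g := by
      have hrw : g = fun x => ∑ i : Fin (n + 1), if x i < x (Fin.last n) then 1 else 0 := by
        funext x; rw [hgdef]; exact Finset.card_filter _ _
      rw [hrw]
      exact Finset.measurable_sum _ fun i _ =>
        Measurable.ite (measurableSet_lt (measurable_pi_apply i)
          (measurable_pi_apply (Fin.last n))) measurable_const measurable_const
    set A : Set (Fin (n + 1) → ℝ) := {x | g x < k} with hAdef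
    have hAmeas : MeasurableSet A :=
      hgmeas (show MeasurableSet {m : ℕ | m < k} from trivial)
    have hvec : Measurable (fun ω => fun i => S i ω) :=
      measurable_pi_lambda _ fun i => hmeas i
    set σ : Equiv.Perm (Fin (n + 1)) := Equiv.swap j (Fin.last n) with hσdef
    have hpvec : Measurable (fun ω => fun i => S (σ i) ω) :=
      measurable_pi_lambda _ fun i => hmeas (σ i)
    have h1 : P (B (Fin.last n)) = Measure.map (fun ω => fun i => S i ω) P A := by
      rw [Measure.map_apply hvec hAmeas]
      rfl
    have h2 : Measure.map (fun ω => fun i => S (σ i) ω) P A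
        = P ((fun ω => fun i => S (σ i) ω) ⁻¹' A) :=
      Measure.map_apply hpvec hAmeas
    have h3 : ((fun ω => fun i => S (σ i) ω) ⁻¹' A) = B j := by
      ext ω
      have hσlast : σ (Fin.last n) = j := by
        rw [hσdef]; exact Equiv.swap_apply_right _ _
      have hmem : (fun i => S (σ i) ω) ∈ A
          ↔ (Finset.univ.filter (fun i => S (σ i) ω < S (σ (Fin.last n)) ω)).card < k :=
        Iff.rfl
      rw [Set.mem_preimage, hmem]
      simp only [hσlast]
      have hre : (Finset.univ.filter (fun i => S (σ i) ω < S j ω)).card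
          = (Finset.univ.filter (fun i => S i ω < S j ω)).card :=
        Finset.card_equiv σ (fun i => by simp)
      rw [hre]
      exact Iff.rfl
    rw [h1, ← hexch σ, h2, h3]
  -- pointwise counting bound
  have hcount : ∀ ω, (k : ℝ≥0∞)
      ≤ ∑ j : Fin (n + 1), (B j).indicator (fun _ => (1 : ℝ≥0∞)) ω := by
    intro ω
    have hsum : ∑ j : Fin (n + 1), (B j).indicator (fun _ => (1 : ℝ≥0∞)) ω
        = ((Finset.univ.filter (fun j => ω ∈ B j)).card : ℝ≥0∞) := by
      rw [Finset.card_filter]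
      push_cast
      refine Finset.sum_congr rfl fun j _ => ?_
      by_cases h : ω ∈ B j <;> simp [Set.indicator_apply, h]
    rw [hsum]
    have hlr := card_low_rank (m := n + 1) (k := k) (by omega) (fun i => S i ω)
    have hset : (Finset.univ.filter (fun j => ω ∈ B j))
        = (Finset.univ.filter (fun j =>
            (Finset.univ.filter (fun i => S i ω < S j ω)).card < k)) := rfl
    rw [hset]
    exact_mod_cast hlr
  -- integrate
  have hsumP : (k : ℝ≥0∞) ≤ ∑ j : Fin (n + 1), P (B j) := by
    have hint : ∑ j : Fin (n + 1), P (B j)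
        = ∫⁻ ω, ∑ j : Fin (n + 1), (B j).indicator (fun _ => (1 : ℝ≥0∞)) ω ∂P := by
      rw [lintegral_finset_sum _ fun j _ =>
        Measurable.indicator measurable_const (hBmeas j)]
      refine Finset.sum_congr rfl fun j _ => ?_
      rw [lintegral_indicator (hBmeas j)]
      simp
    rw [hint]
    have hc : ∫⁻ (_ : Ω), (k : ℝ≥0∞) ∂P = (k : ℝ≥0∞) := by
      rw [lintegral_const, measure_univ, mul_one]
    rw [← hc]
    exact lintegral_mono hcount
  have hsum_eq : ∑ j : Fin (n + 1), P (B j) = ((n : ℝ≥0∞) + 1) * P (B (Fin.last n)) := by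
    rw [Finset.sum_congr rfl fun j _ => hBeq j, Finset.sum_const, Finset.card_univ,
      Fintype.card_fin, nsmul_eq_mul]
    push_cast
    ring
  have hmain : (k : ℝ≥0∞) ≤ ((n : ℝ≥0∞) + 1) * P (B (Fin.last n)) := by
    rw [← hsum_eq]; exact hsumP
  -- the target set equals B (last n)
  have hsetEq : {ω | S (Fin.last n) ω ≤
      kthSmallest n k (fun i => S i.castSucc ω)} = B (Fin.last n) := by
    ext ω
    have hcards : (Finset.univ.filter (fun i : Fin (n + 1) => S i ω < S (Fin.last n) ω)).card
        = (Finset.univ.filter (fun i : Fin n => S i.castSucc ω < S (Fin.last n) ω)).card := by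
      rw [Finset.card_filter, Finset.card_filter, Fin.sum_univ_castSucc]
      simp
    have hmem : ω ∈ B (Fin.last n) ↔ f (Fin.last n) ω < k := Iff.rfl
    rw [Set.mem_setOf_eq, hmem, le_kthSmallest_iff hk1 hk]
    show _ ↔ (Finset.univ.filter
      (fun i : Fin (n + 1) => S i ω < S (Fin.last n) ω)).card < k
    rw [hcards]
  rw [hsetEq]
  -- final arithmetic
  have hle1 : ((n : ℝ≥0∞) + 1) * ENNReal.ofReal (1 - α) ≤ (k : ℝ≥0∞) := by
    have h1 : ((n : ℝ≥0∞) + 1) * ENNReal.ofReal (1 - α)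
        = ENNReal.ofReal (((n : ℝ) + 1) * (1 - α)) := by
      rw [ENNReal.ofReal_mul (by positivity)]
      congr 1
      rw [ENNReal.ofReal_add (by positivity) zero_le_one]
      simp [ENNReal.ofReal_natCast]
    rw [h1]
    calc ENNReal.ofReal (((n : ℝ) + 1) * (1 - α))
        ≤ ENNReal.ofReal ((k : ℝ)) := ENNReal.ofReal_le_ofReal (Nat.le_ceil _)
      _ = (k : ℝ≥0∞) := ENNReal.ofReal_natCast k
  have hfinal : ((n : ℝ≥0∞) + 1) * ENNReal.ofReal (1 - α)
      ≤ ((n : ℝ≥0∞) + 1) * P (B (Fin.last n)) := le_trans hle1 hmain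
  exact (ENNReal.mul_le_mul_iff_right (by simp) (by simp)).1 hfinal
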